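/- Let λ ∈ ℝ, ω > 0, and let τ : [0,∞) → ℝ be twice differentiable with τ(t) > 0 for all t ≥ 0, satisfying τ″ = 2λ/τ + 1/τ³ + ω²τ on [0,∞). Then τ is bounded away from zero: there exists δ > 0 such that τ(t) ≥ δ for all t ≥ 0. -/

import Mathlib

/-- Analytic fact: `4λ log x − 1/x² + ω²x² → −∞` as `x → 0⁺`, in quantitative form. -/
lemma aux_F_small (lam ω E0 : ℝ) :
    ∃ δ > 0, ∀ x : ℝ, 0 < x → x ≤ δ →
      4 * lam * Real.log x - 1 / x ^ 2 + ω ^ 2 * x ^ 2 < -E0 := by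
  set K : ℝ := |E0| + ω ^ 2 + 1 with hKdef
  have hK1 : 1 ≤ K := by nlinarith [abs_nonneg E0, sq_nonneg ω]
  have hK0 : 0 < K := by linarith
  refine ⟨min (1 / (8 * |lam| + 1)) (1 / (2 * K)), by positivity, ?_⟩
  intro x hx hxδ
  have hx1 : x ≤ 1 / (8 * |lam| + 1) := le_trans hxδ (min_le_left _ _)
  have hx2 : x ≤ 1 / (2 * K) := le_trans hxδ (min_le_right _ _)
  have hx1' : x * (8 * |lam| + 1) ≤ 1 := (le_div_iff₀ (by positivity)).mp hx1
  have hx2' : x * (2 * K) ≤ 1 := (le_div_iff₀ (by positivity)).mp hx2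
  have hxhalf : x ≤ 1 / 2 := by nlinarith
  have hxlt1 : x < 1 := by linarith
  set L : ℝ := Real.log x with hL
  have hLneg : L < 0 := Real.log_neg hx hxlt1
  have hLb : -L ≤ 1 / x - 1 := by
    have := Real.log_le_sub_one_of_pos (x := x⁻¹) (by positivity)
    rw [Real.log_inv] at this
    simpa [one_div] using this
  have hLbx : (-L) * x ≤ 1 - x := by
    have := mul_le_mul_of_nonneg_right hLb (le_of_lt hx)
    calc (-L) * x ≤ (1 / x - 1) * x := this
      _ = 1 - x := by field_simp
  have habs1 : lam ≤ |lam| := le_abs_self lam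
  have habs2 : -|lam| ≤ lam := neg_abs_le lam
  -- step 1+2: 4*lam*L ≤ 4*|lam|/x
  have step12 : 4 * lam * L ≤ 4 * |lam| / x := by
    have h1 : 4 * lam * L ≤ 4 * |lam| * (-L) := by nlinarith
    have h2 : 4 * |lam| * (-L) ≤ 4 * |lam| / x := by
      rw [div_eq_mul_inv]
      have : -L ≤ x⁻¹ := by
        have h' : -L ≤ 1 / x := by linarith
        rwa [one_div] at h'
      nlinarith [abs_nonneg lam]
    linarith
  -- step 3: 4*|lam|/x ≤ 1/(2*x^2)
  have step3 : 4 * |lam| / x ≤ 1 / (2 * x ^ 2) := by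
    rw [div_le_div_iff₀ hx (by positivity)]
    nlinarith [sq_nonneg x, mul_pos hx hx]
  -- step 4: ω²x² ≤ ω²
  have hx21 : x ^ 2 ≤ 1 := by nlinarith
  have step4 : ω ^ 2 * x ^ 2 ≤ ω ^ 2 := by
    nlinarith [mul_nonneg (sq_nonneg ω) (by linarith : (0:ℝ) ≤ 1 - x ^ 2)]
  -- step 5: 2*K ≤ 1/(2*x^2)
  have step5 : 2 * K ≤ 1 / (2 * x ^ 2) := by
    rw [le_div_iff₀ (by positivity)]
    nlinarith
  have hinv : 1 / (2 * x ^ 2) + 1 / (2 * x ^ 2) = 1 / x ^ 2 := by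
    field_simp; ring
  have hEabs : E0 ≤ |E0| := le_abs_self E0
  have hEabs' : -|E0| ≤ E0 := neg_abs_le E0
  linarith [step12, step3, step4, step5, hinv, hEabs, hEabs', hKdef.ge, hKdef.le]

/-- Any positive twice differentiable solution of `τ″ = 2λ/τ + 1/τ³ + ω²τ` on `[0,∞)`
is bounded away from zero: there exists `δ > 0` with `τ(t) ≥ δ` for all `t ≥ 0`. -/
theorem ode_solution_bounded_away_from_zero
    (lam ω : ℝ) (hω : 0 < ω) (τ τ' τ'' : ℝ → ℝ)
    (hd1 : ∀ t, 0 ≤ t → HasDerivAt τ (τ' t) t)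
    (hd2 : ∀ t, 0 ≤ t → HasDerivAt τ' (τ'' t) t)
    (hpos : ∀ t, 0 ≤ t → 0 < τ t)
    (hode : ∀ t, 0 ≤ t → τ'' t = 2 * lam / τ t + 1 / (τ t) ^ 3 + ω ^ 2 * τ t) :
    ∃ δ > 0, ∀ t, 0 ≤ t → δ ≤ τ t := by
  set E : ℝ → ℝ := fun t => (τ' t) ^ 2 - 4 * lam * Real.log (τ t)
      + 1 / (τ t) ^ 2 - ω ^ 2 * (τ t) ^ 2 with hEdef
  -- the energy has zero derivative on [0,∞)
  have hEderiv : ∀ t, 0 ≤ t → HasDerivAt E 0 t := by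
    intro t ht
    have h1 := hd1 t ht
    have h2 := hd2 t ht
    have hτ := hpos t ht
    have hτne : τ t ≠ 0 := ne_of_gt hτ
    have hA : HasDerivAt (fun s => (τ' s) ^ 2) (2 * τ' t * τ'' t) t := by
      have := h2.fun_pow 2
      simpa [pow_one] using this.congr_deriv (by ring)
    have hB : HasDerivAt (fun s => Real.log (τ s)) (τ' t / τ t) t := h1.log hτne
    have hC : HasDerivAt (fun s => 1 / (τ s) ^ 2)
        (-(2 * τ t * τ' t) / ((τ t) ^ 2) ^ 2) t := by
      have hsq : HasDerivAt (fun s => (τ s) ^ 2) (2 * τ t * τ' t) t := by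
        have := h1.fun_pow 2
        simpa [pow_one] using this.congr_deriv (by ring)
      have := (hasDerivAt_const t (1:ℝ)).fun_div hsq (pow_ne_zero 2 hτne)
      simpa using this.congr_deriv (by ring)
    have hD : HasDerivAt (fun s => ω ^ 2 * (τ s) ^ 2) (ω ^ 2 * (2 * τ t * τ' t)) t := by
      have hsq : HasDerivAt (fun s => (τ s) ^ 2) (2 * τ t * τ' t) t := by
        have := h1.fun_pow 2
        simpa [pow_one] using this.congr_deriv (by ring)
      exact hsq.const_mul _
    have hall := ((hA.fun_sub (hB.const_mul (4 * lam))).fun_add hC).fun_sub hD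
    have : HasDerivAt E
        (2 * τ' t * τ'' t - 4 * lam * (τ' t / τ t)
          + -(2 * τ t * τ' t) / ((τ t) ^ 2) ^ 2 - ω ^ 2 * (2 * τ t * τ' t)) t := by
      simpa [hEdef, mul_comm] using hall
    convert this using 1
    rw [hode t ht]
    field_simp
    ring
  -- hence E is constant
  have hEconst : ∀ t, 0 ≤ t → E t = E 0 := by
    intro b hb
    rcases eq_or_lt_of_le hb with h | h
    · rw [← h]
    · have hcont : ContinuousOn E (Set.Icc 0 b) := fun x hx =>
        ((hEderiv x hx.1).continuousAt).continuousWithinAt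
      have hder : ∀ x ∈ Set.Ico (0:ℝ) b, HasDerivWithinAt E 0 (Set.Ici x) x :=
        fun x hx => (hEderiv x hx.1).hasDerivWithinAt
      exact constant_of_has_deriv_right_zero hcont hder b ⟨hb, le_refl b⟩
  obtain ⟨δ, hδ, hδF⟩ := aux_F_small lam ω (E 0)
  refine ⟨δ, hδ, fun t ht => ?_⟩
  by_contra hlt
  push_neg at hlt
  have hτ := hpos t ht
  have hF := hδF (τ t) hτ (le_of_lt hlt)
  have hEt := hEconst t ht
  have : 4 * lam * Real.log (τ t) - 1 / (τ t) ^ 2 + ω ^ 2 * (τ t) ^ 2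
      = (τ' t) ^ 2 - E 0 := by
    rw [← hEt]; simp [hEdef]; ring
  nlinarith [sq_nonneg (τ' t)]
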